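/- arXiv:2604.24107 — 2 statements merged into one kernel-verified Lean document; each statement's English description precedes it below -/
import Mathlib

section
/- Let a1 ≤ b1 and a2 ≤ b2 be reals, set e := b2 − a2, and let P be a predicate on ℝ. Then the following are equivalent: (1) for every t1 ∈ [a1, b1] there exists t2 ∈ [t1+a2, t1+b2] with P(t2); (2) for every real c with a1+a2 ≤ c and c+e ≤ b1+b2, there exists s ∈ [c, c+e] with P(s). -/
/-- Characterization of the time-constrained patrol task
`G_{[a1,b1]} F_{[a2,b2]} φ`: the region must be visited at least once in
every subwindow of length `e = b2 - a2` of `[a1+a2, b1+b2]`. -/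
theorem patrol_characterization (a1 b1 a2 b2 : ℝ) (h1 : a1 ≤ b1) (h2 : a2 ≤ b2)
    (e : ℝ) (he : e = b2 - a2) (P : ℝ → Prop) :
    (∀ t1 ∈ Set.Icc a1 b1, ∃ t2 ∈ Set.Icc (t1 + a2) (t1 + b2), P t2) ↔
      (∀ c : ℝ, a1 + a2 ≤ c → c + e ≤ b1 + b2 → ∃ s ∈ Set.Icc c (c + e), P s) := by
  subst he
  constructor
  · intro h c hc1 hc2
    obtain ⟨t2, ht2, hp⟩ := h (c - a2) ⟨by linarith, by linarith⟩
    exact ⟨t2, ⟨by linarith [ht2.1], by linarith [ht2.2]⟩, hp⟩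
  · intro h t1 ht1
    obtain ⟨s, hs, hp⟩ := h (t1 + a2) (by linarith [ht1.1]) (by linarith [ht1.2])
    exact ⟨s, ⟨by linarith [hs.1], by linarith [hs.2]⟩, hp⟩
end

section
/- (Soundness of the G F -case check of Algorithm 1.) Let a1 ≤ b1 and a2 ≤ b2 be reals and set e := b2 − a2. Let k ≥ 1 and let s_0 < s_1 < … < s_{k−1} be a strictly increasing finite sequence of reals such that: s_0 − (a1+a2) ≤ e; (b1+b2) − s_{k−1} ≤ e; a1+a2 ≤ s_0; s_{k−1} ≤ b1+b2; and s_{j+1} − s_j ≤ e for every j ∈ {0,…,k−2}. Then for every t1 ∈ [a1, b1] there exists j ∈ {0,…,k−1} with t1+a2 ≤ s_j ≤ t1+b2. In particular, any signal x satisfying P(x(s_j)) for all j satisfies G_{[a1,b1]}F_{[a2,b2]}P at time 0. -/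
/-- Soundness of the G F-case check of Algorithm 1: if the time instants
`s 0 < s 1 < … < s (k-1)` at which the candidate points lie in the region of
interest satisfy the gap conditions with `e = b2 - a2`, then every
`t1 ∈ [a1, b1]` admits some `s j ∈ [t1+a2, t1+b2]`; in particular any signal
satisfying `P` at all the `s j` satisfies `G_{[a1,b1]} F_{[a2,b2]} P` at 0. -/
theorem gf_check_sound {n : ℕ} (a1 b1 a2 b2 : ℝ) (h1 : a1 ≤ b1) (h2 : a2 ≤ b2)
    (e : ℝ) (he : e = b2 - a2)
    (k : ℕ) (hk : 1 ≤ k) (s : ℕ → ℝ)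
    (hmono : ∀ j, j + 2 ≤ k → s j < s (j + 1))
    (hstart : s 0 - (a1 + a2) ≤ e) (hend : (b1 + b2) - s (k - 1) ≤ e)
    (hlo : a1 + a2 ≤ s 0) (hhi : s (k - 1) ≤ b1 + b2)
    (hgap : ∀ j, j + 2 ≤ k → s (j + 1) - s j ≤ e) :
    (∀ t1 ∈ Set.Icc a1 b1, ∃ j < k, t1 + a2 ≤ s j ∧ s j ≤ t1 + b2) ∧
      (∀ (x : ℝ → (Fin n → ℝ)) (P : (Fin n → ℝ) → Prop),
        (∀ j < k, P (x (s j))) →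
          ∀ t1 ∈ Set.Icc a1 b1, ∃ t2 ∈ Set.Icc (t1 + a2) (t1 + b2), P (x t2)) := by
  classical
  have main : ∀ t1 ∈ Set.Icc a1 b1, ∃ j < k, t1 + a2 ≤ s j ∧ s j ≤ t1 + b2 := by
    intro t1 ht1
    obtain ⟨ht1l, ht1r⟩ := ht1
    set Q : ℕ → Prop := fun j => s j ≤ t1 + b2 with hQ
    have hQ0 : Q 0 := by
      have : s 0 ≤ a1 + b2 := by linarith
      exact le_trans this (by linarith)
    set m := Nat.findGreatest Q (k - 1) with hm
    have hQm : Q m := Nat.findGreatest_spec (Nat.zero_le _) hQ0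
    have hmle : m ≤ k - 1 := Nat.findGreatest_le _
    have hmk : m < k := lt_of_le_of_lt hmle (Nat.sub_lt hk one_pos)
    refine ⟨m, hmk, ?_, hQm⟩
    rcases eq_or_lt_of_le hmle with heq | hlt
    · -- m = k - 1
      have : s m = s (k - 1) := by rw [heq]
      linarith
    · -- m < k - 1, so Q (m+1) fails
      have hsucc : m + 1 ≤ k - 1 := hlt
      have hnQ : ¬ Q (m + 1) :=
        Nat.findGreatest_is_greatest (Nat.lt_succ_self m) hsucc
      have h2k : m + 2 ≤ k := by omega
      have hgap' := hgap m h2k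
      have : t1 + b2 < s (m + 1) := lt_of_not_ge hnQ
      linarith
  refine ⟨main, ?_⟩
  intro x P hP t1 ht1
  obtain ⟨j, hjk, hjl, hjr⟩ := main t1 ht1
  exact ⟨s j, ⟨hjl, hjr⟩, hP j hjk⟩
end
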